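/- Let Q be a basket of type 1/r(a, -a, 1) with index r ≥ 37. Then l(Q, 18) > 52. (In particular, for r ≥ 37 one has l(1/r(1,-1,1), 18) = ∑_{j=1}^{17} j(r - j)/(2r) ≥ ∑_{j=1}^{17} j(37 - j)/74 > 52.) -/
import Mathlib


/-- The Reid correction term `l(r, b, m) = ∑_{j=1}^{m-1} \overline{bj}(r-\overline{bj})/(2r)`,
where `\overline{bj}` is the smallest non-negative residue of `b*j` mod `r`.
(The `j = 0` term vanishes, so we may sum over `j ∈ range m`.) -/
def reidL (r b m : ℕ) : ℚ :=
  ∑ j ∈ Finset.range m,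
    (((b * j) % r : ℕ) : ℚ) * ((r : ℚ) - (((b * j) % r : ℕ) : ℚ)) / (2 * r)

/-- A basket of type `1/r(a, -a, 1)`: a pair of integers `(r, a)` with `r ≥ 2`,
`0 < a < r` and `gcd(a, r) = 1`. -/
structure Basket where
  r : ℕ
  a : ℕ
  two_le_r : 2 ≤ r
  a_pos : 0 < a
  a_lt_r : a < r
  coprime : Nat.Coprime a r

/-- The unique `b` with `0 < b < r` and `a * b ≡ 1 (mod r)`. -/
def Basket.binv (Q : Basket) : ℕ := ((Q.a : ZMod Q.r)⁻¹).val

/-- The correction term `l(Q, m)` of a basket. -/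
def Basket.l (Q : Basket) (m : ℕ) : ℚ := reidL Q.r Q.binv m

/-- `Δ_n(Q) := n² l(Q,2) + l(Q,n) - l(Q,n+1)`. -/
def Basket.delta (Q : Basket) (n : ℕ) : ℚ :=
  (n : ℚ) ^ 2 * Q.l 2 + Q.l n - Q.l (n + 1)

/-- A formal basket datum with `χ = 1`: a finite multiset of baskets together
with a positive rational number `K`. -/
structure FormalDatum where
  B : Multiset Basket
  K : ℚ
  K_pos : 0 < K

/-- The formal plurigenus `P(m) = (1/12)m(m-1)(2m-1)K - (2m-1) + ∑_{Q ∈ B} l(Q, m)`. -/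
def FormalDatum.P (D : FormalDatum) (m : ℕ) : ℚ :=
  (1 / 12 : ℚ) * m * (m - 1) * (2 * m - 1) * D.K - (2 * m - 1)
    + (D.B.map (fun Q => Q.l m)).sum

/-- Cap function: `hfun t = m(37-m)/74` where `m = min t 18`. -/
def hfun (t : ℕ) : ℚ := ((min t 18 : ℕ) : ℚ) * (37 - ((min t 18 : ℕ) : ℚ)) / 74

lemma hfun_mono : Monotone hfun := by
  intro a b hab
  unfold hfun
  have h1 : (min a 18 : ℕ) ≤ min b 18 := min_le_min hab le_rfl
  have h2 : (min b 18 : ℕ) ≤ 18 := min_le_right _ _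
  have c1 : ((min a 18 : ℕ) : ℚ) ≤ ((min b 18 : ℕ) : ℚ) := by exact_mod_cast h1
  have c2 : ((min b 18 : ℕ) : ℚ) ≤ 18 := by exact_mod_cast h2
  have c0 : (0:ℚ) ≤ ((min a 18 : ℕ) : ℚ) := by positivity
  have : ((min a 18 : ℕ) : ℚ) * (37 - ((min a 18 : ℕ) : ℚ))
      ≤ ((min b 18 : ℕ) : ℚ) * (37 - ((min b 18 : ℕ) : ℚ)) := by nlinarith
  linarith

/-- Rearrangement: if `S` has `n` distinct positive integers and `h` is monotone,
then `∑_{i=1}^n h i ≤ ∑_{x ∈ S} h x`. -/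
lemma sorted_sum_le (h : ℕ → ℚ) (mono : Monotone h) :
    ∀ (n : ℕ) (S : Finset ℕ), S.card = n → (∀ x ∈ S, 1 ≤ x) →
      ∑ i ∈ Finset.Icc 1 n, h i ≤ ∑ x ∈ S, h x := by
  intro n
  induction n with
  | zero =>
    intro S hc _
    simp [Finset.card_eq_zero.mp hc]
  | succ n ih =>
    intro S hcard hpos
    have hne : S.Nonempty := Finset.card_pos.mp (by omega)
    set M := S.max' hne with hM
    have hMS : M ∈ S := S.max'_mem hne
    have hsub : S ⊆ Finset.Icc 1 M := fun x hx =>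
      Finset.mem_Icc.mpr ⟨hpos x hx, S.le_max' x hx⟩
    have hcardle : n + 1 ≤ M := by
      have := Finset.card_le_card hsub
      simpa [Nat.card_Icc, hcard] using this
    have herase : (S.erase M).card = n := by
      rw [Finset.card_erase_of_mem hMS, hcard]; omega
    have ih' := ih (S.erase M) herase (fun x hx => hpos x (Finset.mem_of_mem_erase hx))
    have hsum : ∑ x ∈ S.erase M, h x + h M = ∑ x ∈ S, h x := Finset.sum_erase_add S h hMS
    have htop : ∑ i ∈ Finset.Icc 1 (n+1), h i
        = ∑ i ∈ Finset.Icc 1 n, h i + h (n+1) := Finset.sum_Icc_succ_top (by omega) h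
    have hm : h (n+1) ≤ h M := mono hcardle
    linarith

lemma target_sum : (52:ℚ) < ∑ j ∈ Finset.range 18, (j : ℚ) * (37 - (j : ℚ)) / 74 := by
  norm_num [Finset.sum_range_succ]

lemma hfun_sum : (52:ℚ) < ∑ i ∈ Finset.Icc 1 17, hfun i := by
  have : ∑ i ∈ Finset.Icc 1 17, hfun i
      = ∑ j ∈ Finset.range 18, (j : ℚ) * (37 - (j : ℚ)) / 74 := by
    norm_num [hfun, Finset.sum_range_succ, Finset.sum_Icc_succ_top, Finset.Icc_self]
  rw [this]; exact target_sum

/-- Pointwise: for `1 ≤ d`, `2d ≤ r`, `37 ≤ r`: `hfun d ≤ d(r-d)/(2r)`. -/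
lemma hfun_le (r d : ℕ) (hr : 37 ≤ r) (hd1 : 1 ≤ d) (hd2 : 2 * d ≤ r) :
    hfun d ≤ (d : ℚ) * ((r : ℚ) - (d : ℚ)) / (2 * r) := by
  have hrQ : (37:ℚ) ≤ (r:ℚ) := by exact_mod_cast hr
  have hrpos : (0:ℚ) < 2 * (r:ℚ) := by
    have : (0:ℚ) < (r:ℚ) := by positivity -- wrong, fix below
    linarith
  rcases le_or_gt d 18 with hle | hgt
  · have hm : min d 18 = d := min_eq_left hle
    unfold hfun
    rw [hm, div_le_div_iff₀ (by norm_num) hrpos]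
    have hd0 : (0:ℚ) ≤ (d:ℚ) := by positivity
    nlinarith [mul_nonneg (mul_nonneg hd0 hd0) (by linarith : (0:ℚ) ≤ (r:ℚ) - 37)]
  · have hm : min d 18 = 18 := min_eq_right (by omega)
    unfold hfun
    rw [hm, div_le_div_iff₀ (by norm_num) hrpos]
    have h19 : (19:ℚ) ≤ (d:ℚ) := by exact_mod_cast hgt
    have h2d : 2 * (d:ℚ) ≤ (r:ℚ) := by exact_mod_cast hd2
    norm_num
    nlinarith [mul_nonneg (by linarith : (0:ℚ) ≤ (d:ℚ) - 19) (by linarith : (0:ℚ) ≤ (r:ℚ) - 2*(d:ℚ)),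
      mul_nonneg (by linarith : (0:ℚ) ≤ (d:ℚ) - 19) (by linarith : (0:ℚ) ≤ (d:ℚ) - 19)]


/-- For a basket `Q` of index `r ≥ 37`, `l(Q, 18) > 52`; in particular
`l(1/r(1,-1,1), 18) ≥ ∑_{j=1}^{17} j(37-j)/74 > 52`. -/
theorem basket_l_eighteen_gt (Q : Basket) (h : 37 ≤ Q.r) :
    52 < Q.l 18 ∧
    (∑ j ∈ Finset.range 18, (j : ℚ) * (37 - (j : ℚ)) / 74 ≤ reidL Q.r 1 18) ∧
    52 < ∑ j ∈ Finset.range 18, (j : ℚ) * (37 - (j : ℚ)) / 74 := by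
  have hr0 : 0 < Q.r := by omega
  have hrQ : (37:ℚ) ≤ (Q.r:ℚ) := by exact_mod_cast h
  have hrQ0 : (0:ℚ) < (Q.r:ℚ) := by exact_mod_cast hr0
  refine ⟨?_, ?_, target_sum⟩
  · -- main part
    haveI : NeZero Q.r := ⟨by omega⟩
    set r := Q.r with hrdef
    set b := Q.binv with hbdef
    have hcop : Nat.Coprime b r := by
      have hu : (Q.a : ZMod Q.r)⁻¹ = ((ZMod.unitOfCoprime Q.a Q.coprime)⁻¹ : (ZMod Q.r)ˣ) := by
        rw [← ZMod.coe_unitOfCoprime Q.a Q.coprime, ZMod.inv_coe_unit]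
      rw [hbdef, Basket.binv, hu]
      exact ZMod.val_coe_unit_coprime _
    set x : ℕ → ℕ := fun j => (b * j) % r with hxdef
    set d : ℕ → ℕ := fun j => min (x j) (r - x j) with hddef
    have hxlt : ∀ j, x j < r := fun j => Nat.mod_lt _ hr0
    have hxne : ∀ j ∈ Finset.Icc 1 17, x j ≠ 0 := by
      intro j hj hx0
      simp only [Finset.mem_Icc] at hj
      have hdvd : r ∣ b * j := Nat.dvd_of_mod_eq_zero hx0
      have : r ∣ j := (Nat.Coprime.symm hcop).dvd_of_dvd_mul_left hdvd
      have := Nat.le_of_dvd (by omega) this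
      omega
    have hd1 : ∀ j ∈ Finset.Icc 1 17, 1 ≤ d j := by
      intro j hj
      have h1 := hxne j hj
      have h2 := hxlt j
      simp only [hddef]
      omega
    have hd2 : ∀ j, 2 * d j ≤ r := by
      intro j
      have := hxlt j
      simp only [hddef]
      omega
    -- injectivity of d on Icc 1 17
    have hinj : ∀ j ∈ Finset.Icc 1 17, ∀ k ∈ Finset.Icc 1 17, d j = d k → j = k := by
      intro j hj k hk hdjk
      simp only [Finset.mem_Icc] at hj hk
      have hxj := hxlt j
      have hxk := hxlt k
      have hcase : x j = x k ∨ x j + x k = r := by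
        rcases min_choice (x j) (r - x j) with h1 | h1 <;>
          rcases min_choice (x k) (r - x k) with h2 | h2 <;>
          simp only [hddef] at hdjk <;> omega
      rcases hcase with hc | hc
      · have hmod : b * j ≡ b * k [MOD r] := hc
        have : j ≡ k [MOD r] := Nat.ModEq.cancel_left_of_coprime (Nat.Coprime.symm hcop) hmod
        have : j % r = k % r := this
        rw [Nat.mod_eq_of_lt (by omega), Nat.mod_eq_of_lt (by omega)] at this
        exact this
      · exfalso
        have hz : (b * (j + k)) % r = 0 := by
          rw [mul_add, Nat.add_mod]
          show ((x j) + (x k)) % r = 0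
          rw [hc, Nat.mod_self]
        have hdvd : r ∣ b * (j + k) := Nat.dvd_of_mod_eq_zero hz
        have : r ∣ (j + k) := (Nat.Coprime.symm hcop).dvd_of_dvd_mul_left hdvd
        have := Nat.le_of_dvd (by omega) this
        omega
    -- term equality F j = G (d j)
    have hterm : ∀ j, ((x j : ℚ)) * ((r:ℚ) - (x j : ℚ)) / (2 * r)
        = ((d j : ℚ)) * ((r:ℚ) - (d j : ℚ)) / (2 * r) := by
      intro j
      have hle := (hxlt j).le
      rcases min_choice (x j) (r - x j) with h1 | h1 <;> simp only [hddef]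
      · rw [h1]
      · rw [h1]
        congr 1
        push_cast [Nat.cast_sub hle]
        ring
    -- nonnegativity of terms
    have hnn : ∀ j, (0:ℚ) ≤ ((x j : ℚ)) * ((r:ℚ) - (x j : ℚ)) / (2 * r) := by
      intro j
      have h1 : (0:ℚ) ≤ (x j : ℚ) := by positivity
      have h2 : (x j : ℚ) ≤ (r:ℚ) := by exact_mod_cast (hxlt j).le
      exact div_nonneg (mul_nonneg h1 (by linarith)) (by linarith)
    -- chain
    have step1 : Q.l 18 = ∑ j ∈ Finset.range 18,
        ((x j : ℚ)) * ((r:ℚ) - (x j : ℚ)) / (2 * r) := rfl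
    have step2 : ∑ j ∈ Finset.Icc 1 17, ((x j : ℚ)) * ((r:ℚ) - (x j : ℚ)) / (2 * r)
        ≤ ∑ j ∈ Finset.range 18, ((x j : ℚ)) * ((r:ℚ) - (x j : ℚ)) / (2 * r) := by
      apply Finset.sum_le_sum_of_subset_of_nonneg
      · intro i hi
        simp only [Finset.mem_Icc] at hi
        exact Finset.mem_range.mpr (by omega)
      · intro i _ _; exact hnn i
    have step3 : ∑ j ∈ Finset.Icc 1 17, hfun (d j)
        ≤ ∑ j ∈ Finset.Icc 1 17, ((x j : ℚ)) * ((r:ℚ) - (x j : ℚ)) / (2 * r) := by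
      apply Finset.sum_le_sum
      intro j hj
      rw [hterm j]
      exact hfun_le r (d j) h (hd1 j hj) (hd2 j)
    have simage : ((Finset.Icc 1 17).image d).card = 17 := by
      rw [Finset.card_image_of_injOn (fun a ha b hb => hinj a ha b hb)]
      simp
    have step4 : ∑ i ∈ Finset.Icc 1 17, hfun i ≤ ∑ j ∈ Finset.Icc 1 17, hfun (d j) := by
      rw [← Finset.sum_image (fun a ha b hb => hinj a ha b hb)]
      have := sorted_sum_le hfun hfun_mono 17 ((Finset.Icc 1 17).image d) simage
        (by
          intro t ht
          rcases Finset.mem_image.mp ht with ⟨j, hj, rfl⟩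
          exact hd1 j hj)
      exact this
    have := hfun_sum
    rw [step1]
    linarith
  · -- part 2
    unfold reidL
    apply Finset.sum_le_sum
    intro j hj
    have hjlt : j < 18 := Finset.mem_range.mp hj
    have hjr : (1 * j) % Q.r = j := by
      rw [one_mul]; exact Nat.mod_eq_of_lt (by omega)
    rw [hjr]
    have hjQ : (0:ℚ) ≤ (j:ℚ) := by positivity
    rw [div_le_div_iff₀ (by norm_num) (by linarith : (0:ℚ) < 2 * (Q.r:ℚ))]
    nlinarith [mul_nonneg (mul_nonneg hjQ hjQ) (by linarith : (0:ℚ) ≤ (Q.r:ℚ) - 37)]
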